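/- arXiv:1202.5504 — 5 statements merged into one kernel-verified Lean document; each statement's English description precedes it below -/
import Mathlib

section
/- If n = p^k is a prime power with k ≥ 1, then gcd{C(n,1), C(n,2), ..., C(n,n-1)} = p. -/
/-- If `n = p^k` is a prime power with `k ≥ 1`, then
`gcd {C(n,1), C(n,2), ..., C(n,n-1)} = p`. -/
theorem gcd_binomial_prime_power (p k n : ℕ) (hp : p.Prime) (hk : 1 ≤ k)
    (hn : n = p ^ k) :
    (Finset.Icc 1 (n - 1)).gcd (fun i => n.choose i) = p := by
  subst hn
  have hn1 : 1 < p ^ k := Nat.one_lt_pow (by omega) hp.one_lt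
  set d := (Finset.Icc 1 (p ^ k - 1)).gcd (fun i => (p ^ k).choose i) with hd
  -- p divides every element
  have hpd : p ∣ d := by
    apply Finset.dvd_gcd
    intro i hi
    simp only [Finset.mem_Icc] at hi
    exact Nat.Prime.dvd_choose_pow hp (by omega) (by omega)
  -- key element: choose (p^k) (p^(k-1)) has p-adic multiplicity 1
  have hmem : p ^ (k - 1) ∈ Finset.Icc 1 (p ^ k - 1) := by
    simp only [Finset.mem_Icc]
    constructor
    · exact Nat.one_le_pow _ _ hp.pos
    · have : p ^ (k - 1) < p ^ k := Nat.pow_lt_pow_right hp.one_lt (by omega)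
      omega
  have hdc : d ∣ (p ^ k).choose (p ^ (k - 1)) := Finset.gcd_dvd hmem
  have hle : p ^ (k - 1) ≤ p ^ k := Nat.pow_le_pow_right hp.pos (by omega)
  have hne : p ^ (k - 1) ≠ 0 := pow_ne_zero _ hp.pos.ne' -- Nat.pos_iff.mp (Nat.one_le_pow _ _ hp.pos) |>.ne'
  have hmul : emultiplicity p ((p ^ k).choose (p ^ (k - 1))) = (1 : ℕ) := by
    rw [Nat.Prime.emultiplicity_choose_prime_pow hp hle hne,
      multiplicity_pow_self_of_prime hp.prime]
    congr 1
    omega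
  have hnsq : ¬ p ^ 2 ∣ (p ^ k).choose (p ^ (k - 1)) := by
    rw [emultiplicity_eq_coe] at hmul
    exact hmul.2
  -- d divides choose (p^k) 1 = p^k
  have hdn : d ∣ p ^ k := by
    have := Finset.gcd_dvd (f := fun i => (p ^ k).choose i)
      (show 1 ∈ Finset.Icc 1 (p ^ k - 1) by simp; omega)
    simpa using this
  obtain ⟨j, hj, hdj⟩ := (Nat.dvd_prime_pow hp).mp hdn
  rw [hdj] at hpd hdc ⊢
  have hj1 : 1 ≤ j := by
    by_contra h
    have : j = 0 := by omega
    subst this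
    simp at hpd
    exact hp.one_lt.ne' hpd
  have hj2 : j < 2 := by
    by_contra h
    exact hnsq (dvd_trans (pow_dvd_pow p (by omega)) hdc)
  have : j = 1 := by omega
  simp [this]
end

section
/- If n ≥ 2 is not a prime power, then gcd{C(n,1), C(n,2), ..., C(n,n-1)} = 1. -/
/-- Lucas-type lemma: `C(p^j * x, p^j) ≡ x mod p`. -/
lemma choose_pow_mul_mod {p : ℕ} (hp : p.Prime) (j x : ℕ) :
    ((p ^ j * x).choose (p ^ j)) ≡ x [MOD p] := by
  haveI : Fact p.Prime := ⟨hp⟩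
  induction j with
  | zero => simpa [Nat.choose_one_right] using Nat.ModEq.refl x
  | succ j ih =>
    have hp0 : 0 < p := hp.pos
    have key := @Choose.choose_modEq_choose_mod_mul_choose_div_nat
      (p ^ (j + 1) * x) (p ^ (j + 1)) p _
    have e1 : p ^ (j + 1) * x = p * (p ^ j * x) := by ring
    have e2 : p ^ (j + 1) = p * p ^ j := by ring
    rw [e1, e2, Nat.mul_mod_right, Nat.mul_mod_right, Nat.mul_div_cancel_left _ hp0,
      Nat.mul_div_cancel_left _ hp0, Nat.choose_zero_right, one_mul] at key
    rw [e1, e2]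
    exact key.trans ih

/-- If `n ≥ 2` is not a prime power, then
`gcd {C(n,1), C(n,2), ..., C(n,n-1)} = 1`. -/
theorem gcd_binomial_not_prime_power (n : ℕ) (hn : 2 ≤ n) (h : ¬ IsPrimePow n) :
    (Finset.Icc 1 (n - 1)).gcd (fun i => n.choose i) = 1 := by
  by_contra hg
  set g := (Finset.Icc 1 (n - 1)).gcd (fun i => n.choose i) with hgdef
  have hmem1 : (1 : ℕ) ∈ Finset.Icc 1 (n - 1) := by
    simp [Finset.mem_Icc]; omega
  have hgn : g ∣ n := by
    have := Finset.gcd_dvd (f := fun i => n.choose i) hmem1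
    simpa [Nat.choose_one_right] using this
  have hn0 : n ≠ 0 := by omega
  have hg0 : g ≠ 0 := fun h0 => hn0 (Nat.eq_zero_of_zero_dvd (h0 ▸ hgn))
  obtain ⟨p, hp, hpg⟩ := Nat.exists_prime_and_dvd hg
  have hpn : p ∣ n := hpg.trans hgn
  set a := n.factorization p with ha
  have hpa_dvd : p ^ a ∣ n := Nat.ordProj_dvd n p
  have ha1 : 1 ≤ a := by
    rw [ha]
    exact (Nat.Prime.factorization_pos_of_dvd hp hn0 hpn)
  set m := n / p ^ a with hm
  have hnm : n = p ^ a * m := (Nat.mul_div_cancel' hpa_dvd).symm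
  have hpm : ¬ p ∣ m := Nat.not_dvd_ordCompl hp hn0
  have hpan : p ^ a ≠ n := by
    intro heq
    exact h ⟨p, a, hp.prime, by omega, heq⟩
  have hpa_le : p ^ a ≤ n - 1 := by
    have := Nat.le_of_dvd (by omega) hpa_dvd
    omega
  have hmem2 : p ^ a ∈ Finset.Icc 1 (n - 1) := by
    rw [Finset.mem_Icc]
    exact ⟨Nat.one_le_pow _ _ hp.pos, hpa_le⟩
  have hdvd : p ∣ n.choose (p ^ a) :=
    hpg.trans (Finset.gcd_dvd (f := fun i => n.choose i) hmem2)
  have hmod : (n.choose (p ^ a)) ≡ m [MOD p] := by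
    rw [hnm]; exact choose_pow_mul_mod hp a m
  have : p ∣ m := by
    have := (Nat.modEq_zero_iff_dvd.mpr hdvd).symm.trans hmod
    exact Nat.modEq_zero_iff_dvd.mp this.symm
  exact hpm this
end

section
/- If n has at least two distinct prime factors and p^k is the exact power of a prime p dividing n (so p^k || n), then p does not divide C(n, p^k). -/
/-- If `n` has at least two distinct prime factors and `p^k` is the exact power of the
prime `p` dividing `n` (i.e. `p^k ∣ n` but `p^(k+1) ∤ n`), then `p` does not divide
`C(n, p^k)`. -/
theorem not_prime_dvd_choose_exact_power (n p k : ℕ)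
    (htwo : ∃ q r : ℕ, q.Prime ∧ r.Prime ∧ q ≠ r ∧ q ∣ n ∧ r ∣ n)
    (hp : p.Prime) (hdvd : p ^ k ∣ n) (hndvd : ¬ p ^ (k + 1) ∣ n) :
    ¬ p ∣ n.choose (p ^ k) := by
  have hn0 : n ≠ 0 := by rintro rfl; exact hndvd (dvd_zero _)
  have hkn : p ^ k ≤ n := Nat.le_of_dvd (Nat.pos_of_ne_zero hn0) hdvd
  rw [← emultiplicity_eq_zero]
  rw [Nat.Prime.emultiplicity_choose hp hkn (Nat.lt_succ_self _)]
  obtain ⟨s, rfl⟩ := hdvd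
  have hps : ¬ p ∣ s := fun h => hndvd (by
    obtain ⟨t, rfl⟩ := h
    exact ⟨t, by ring⟩)
  have hs0 : s ≠ 0 := by rintro rfl; simp at hn0
  have hpk0 : 0 < p ^ k := pow_pos hp.pos k
  have hcard : ({i ∈ Finset.Ico 1 (Nat.log p (p ^ k * s) + 1) |
      p ^ i ≤ p ^ k % p ^ i + (p ^ k * s - p ^ k) % p ^ i} : Finset ℕ) = ∅ := by
    rw [Finset.filter_eq_empty_iff]
    intro i _
    simp only [not_le]
    rcases le_or_gt i k with h | h
    · have h1 : p ^ k % p ^ i = 0 := Nat.mod_eq_zero_of_dvd (pow_dvd_pow p h)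
      have h2 : (p ^ k * s - p ^ k) % p ^ i = 0 := Nat.mod_eq_zero_of_dvd
        ((pow_dvd_pow p h).trans (Nat.dvd_sub (dvd_mul_right _ _) dvd_rfl))
      rw [h1, h2]
      exact pow_pos hp.pos i
    · have hpk_lt : p ^ k < p ^ i := Nat.pow_lt_pow_right hp.one_lt h
      have h1 : p ^ k % p ^ i = p ^ k := Nat.mod_eq_of_lt hpk_lt
      have hm : p ^ i = p ^ k * p ^ (i - k) := by rw [← pow_add]; congr 1; omega
      set m := p ^ (i - k) with hm'
      have hm0 : 0 < m := pow_pos hp.pos _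
      have hpm : p ∣ m := dvd_pow_self p (by omega)
      have ht0 : s % m ≠ 0 := fun h0 => hps (hpm.trans (Nat.dvd_of_mod_eq_zero h0))
      have htm : s % m < m := Nat.mod_lt _ hm0
      have hdm : s = m * (s / m) + s % m := (Nat.div_add_mod s m).symm
      obtain ⟨t', ht'⟩ : ∃ t', s % m = t' + 1 := ⟨s % m - 1, by omega⟩
      have hsub : (p ^ k * s - p ^ k) % p ^ i = p ^ k * t' := by
        have hs1 : p ^ k * s - p ^ k = p ^ k * (s - 1) := by
          rw [Nat.mul_sub]; simp
        rw [hs1, hm, Nat.mul_mod_mul_left]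
        congr 1
        have : s - 1 = m * (s / m) + t' := by omega
        rw [this, Nat.mul_add_mod, Nat.mod_eq_of_lt (by omega)]
      rw [h1, hsub, hm]
      have : t' + 1 < m := by omega
      nlinarith [hpk0]
  rw [hcard]
  simp
end

section
/- For n ≥ 2, the linear Diophantine equation x_1·C(n,1) + x_2·C(n,2) + ... + x_{n-1}·C(n,n-1) = 1 has a solution in integers x_1, ..., x_{n-1} if and only if n is not a prime power. -/
open Finset

/-- Bezout over a finite set: some integer combination of `c i` equals the gcd. -/
lemma exists_int_combo_eq_gcd (s : Finset ℕ) (c : ℕ → ℕ) :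
    ∃ x : ℕ → ℤ, ∑ i ∈ s, x i * (c i : ℤ) = ((Finset.gcd s c : ℕ) : ℤ) := by
  classical
  induction s using Finset.induction with
  | empty => exact ⟨0, by simp⟩
  | @insert a s ha ih =>
    obtain ⟨x, hx⟩ := ih
    refine ⟨fun i => if i = a then Nat.gcdA (c a) (s.gcd c)
      else Nat.gcdB (c a) (s.gcd c) * x i, ?_⟩
    rw [Finset.sum_insert ha, Finset.gcd_insert]
    have h2 : ∑ i ∈ s, (if i = a then Nat.gcdA (c a) (s.gcd c)
        else Nat.gcdB (c a) (s.gcd c) * x i) * (c i : ℤ)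
        = Nat.gcdB (c a) (s.gcd c) * ∑ i ∈ s, x i * (c i : ℤ) := by
      rw [Finset.mul_sum]
      refine Finset.sum_congr rfl fun i hi => ?_
      rw [if_neg (fun h : i = a => ha (h ▸ hi))]
      ring
    beta_reduce
    rw [if_pos rfl, h2, hx]
    show _ = ((Nat.gcd (c a) (s.gcd c) : ℕ) : ℤ)
    rw [Nat.gcd_eq_gcd_ab (c a) (s.gcd c)]
    ring

/-- If `p` is prime, then `p ∤ C(n, p^(v_p(n)))` (by Lucas's theorem). -/
lemma not_dvd_choose_ordProj {p n : ℕ} (hp : p.Prime) (hn : n ≠ 0) :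
    ¬ p ∣ n.choose (p ^ n.factorization p) := by
  haveI : Fact p.Prime := ⟨hp⟩
  set a := n.factorization p with ha
  have hmod : (n.choose (p ^ a) : ℤ) ≡
      ((n / p ^ a).choose (p ^ a / p ^ a) : ℕ) *
        ((∏ i ∈ Finset.range a, ((n / p ^ i % p).choose (p ^ a / p ^ i % p)) : ℕ)) [ZMOD p] :=
    Choose.choose_modEq_choose_mul_prod_range_choose a
  have hprod : (∏ i ∈ Finset.range a, ((n / p ^ i % p).choose (p ^ a / p ^ i % p))) = 1 := by
    refine Finset.prod_eq_one fun i hi => ?_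
    have hi' : i < a := Finset.mem_range.mp hi
    have h1 : p ^ a / p ^ i = p ^ (a - i) := Nat.pow_div hi'.le hp.pos
    have hd : p ∣ p ^ (a - i) := dvd_pow_self p (Nat.sub_ne_zero_of_lt hi')
    have h0 : p ^ (a - i) % p = 0 := by
      obtain ⟨c, hc⟩ := hd; rw [hc, Nat.mul_mod_right]
    rw [h1, h0, Nat.choose_zero_right]
  rw [hprod, Nat.pow_div le_rfl hp.pos, Nat.sub_self, pow_zero, Nat.choose_one_right] at hmod
  intro hdvd
  have h1 : ((p : ℤ)) ∣ (n.choose (p ^ a) : ℤ) := Int.natCast_dvd_natCast.mpr hdvd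
  have h2 : ((p : ℤ)) ∣ ((n / p ^ a : ℕ) : ℤ) := by
    have hd := hmod.dvd
    simpa using dvd_add hd h1
  exact Nat.not_dvd_ordCompl hp hn (Int.natCast_dvd_natCast.mp h2)

/-- For `n ≥ 2`, the linear Diophantine equation
`x_1·C(n,1) + ... + x_{n-1}·C(n,n-1) = 1` has an integer solution if and only if
`n` is not a prime power. -/
theorem diophantine_binomial_iff_not_prime_power (n : ℕ) (hn : 2 ≤ n) :
    (∃ x : ℕ → ℤ, ∑ i ∈ Finset.Icc 1 (n - 1), x i * (n.choose i : ℤ) = 1) ↔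
      ¬ IsPrimePow n := by
  constructor
  · rintro ⟨x, hx⟩ ⟨p, k, hp, hk, rfl⟩
    have hp' : p.Prime := Nat.prime_iff.mpr hp
    have hdvd : (p : ℤ) ∣ 1 := by
      rw [← hx]
      refine Finset.dvd_sum fun i hi => ?_
      rw [Finset.mem_Icc] at hi
      have h1 : i ≠ 0 := by omega
      have h2 : i ≠ p ^ k := by
        have := Nat.one_lt_pow hk.ne' hp'.one_lt
        omega
      exact Dvd.dvd.mul_left
        (Int.natCast_dvd_natCast.mpr (Nat.Prime.dvd_choose_pow hp' h1 h2)) _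
    have := Int.le_of_dvd one_pos hdvd
    have := hp'.two_le
    omega
  · intro hnpp
    have hgcd : (Finset.Icc 1 (n - 1)).gcd n.choose = 1 := by
      by_contra h
      have hdn : (Finset.Icc 1 (n - 1)).gcd n.choose ∣ n := by
        have h1 : (1 : ℕ) ∈ Finset.Icc 1 (n - 1) := by
          rw [Finset.mem_Icc]; omega
        have := Finset.gcd_dvd (f := n.choose) h1
        rwa [Nat.choose_one_right] at this
      obtain ⟨p, hp, hpd⟩ := Nat.exists_prime_and_dvd h
      have hpn : p ∣ n := hpd.trans hdn
      set a := n.factorization p with ha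
      have ha1 : 1 ≤ a := hp.factorization_pos_of_dvd (by omega) hpn
      have hpa_dvd : p ^ a ∣ n := Nat.ordProj_dvd n p
      have hpa_le : p ^ a ≤ n := Nat.le_of_dvd (by omega) hpa_dvd
      have hpa_ne : p ^ a ≠ n := fun h' =>
        hnpp ⟨p, a, Nat.prime_iff.mp hp, ha1, h'⟩
      have hmem : p ^ a ∈ Finset.Icc 1 (n - 1) := by
        rw [Finset.mem_Icc]
        exact ⟨Nat.one_le_pow _ _ hp.pos, by omega⟩
      have : p ∣ n.choose (p ^ a) := hpd.trans (Finset.gcd_dvd hmem)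
      exact not_dvd_choose_ordProj hp (by omega) this
    obtain ⟨x, hx⟩ := exists_int_combo_eq_gcd (Finset.Icc 1 (n - 1)) n.choose
    exact ⟨x, by rw [hx, hgcd]; norm_num⟩
end

section
/- The relation on pairs (σ, i) with σ ∈ S_n and i ∈ {1,...,d}^{n-1} defined by: (σ,i) ⪯ (σ',i') iff whenever σ'_k appears before σ'_ℓ in σ' with separating index i'_p (the minimum index between them), then either σ_k appears before σ_ℓ in σ with minimum separating index i_p ≤ i'_p, or σ_ℓ appears before σ_k in σ with minimum separating index i_p < i'_p — is a partial order (reflexive, antisymmetric, transitive). -/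
/-- Extend an index vector `i ∈ {1,...,d}^{n-1}` (encoded as `Fin (n-1) → Fin d`,
with actual value `(i j) + 1`) to a function `ℕ → ℕ`. -/
def idxFun {n d : ℕ} (ii : Fin (n - 1) → Fin d) : ℕ → ℕ :=
  fun t => if h : t < n - 1 then (ii ⟨t, h⟩ : ℕ) + 1 else 0

/-- The minimum separating index between positions `a < b`: `min {f a, ..., f (b-1)}`. -/
noncomputable def minSep (f : ℕ → ℕ) (a b : ℕ) : ℕ := sInf (f '' Set.Ico a b)

/-- The order relation on pairs `(σ, i)`: `(σ,i) ⪯ (σ',i')` iff for all letters `u, v`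
such that `u` appears before `v` in `σ'`, either `u` appears before `v` in `σ` with
minimum separating index `≤` that in `σ'`, or `v` appears before `u` in `σ` with
minimum separating index `<` that in `σ'`. -/
def cellLE (n d : ℕ) (p q : Equiv.Perm (Fin n) × (Fin (n - 1) → Fin d)) : Prop :=
  ∀ u v : Fin n, (q.1.symm u : ℕ) < (q.1.symm v : ℕ) →
    ((p.1.symm u : ℕ) < (p.1.symm v : ℕ) ∧
      minSep (idxFun p.2) (p.1.symm u) (p.1.symm v) ≤
        minSep (idxFun q.2) (q.1.symm u) (q.1.symm v)) ∨
    ((p.1.symm v : ℕ) < (p.1.symm u : ℕ) ∧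
      minSep (idxFun p.2) (p.1.symm v) (p.1.symm u) <
        minSep (idxFun q.2) (q.1.symm u) (q.1.symm v))

lemma minSep_single (f : ℕ → ℕ) (a : ℕ) : minSep f a (a + 1) = f a := by
  have h : Set.Ico a (a + 1) = {a} := by
    ext x; simp [Set.mem_Ico]; omega
  simp [minSep, h]

/-- The relation `⪯` on pairs `(σ, i)` is a partial order: reflexive, antisymmetric
and transitive. This is the face poset of the cell complex model of `F(ℝ^d, n)`. -/
theorem cellLE_is_partial_order (n d : ℕ) (hn : 2 ≤ n) (hd : 1 ≤ d) :
    (∀ p, cellLE n d p p) ∧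
    (∀ p q, cellLE n d p q → cellLE n d q p → p = q) ∧
    (∀ p q r, cellLE n d p q → cellLE n d q r → cellLE n d p r) := by
  refine ⟨?_, ?_, ?_⟩
  · intro p u v h
    exact Or.inl ⟨h, le_rfl⟩
  · rintro ⟨σp, ip⟩ ⟨σq, iq⟩ hpq hqp
    dsimp only [cellLE] at hpq hqp
    -- order agreement
    have C1 : ∀ u v : Fin n, (σq.symm u : ℕ) < (σq.symm v : ℕ) →
        (σp.symm u : ℕ) < (σp.symm v : ℕ) := by
      intro u v h
      rcases hpq u v h with ⟨h1, _⟩ | ⟨h1, h2⟩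
      · exact h1
      · rcases hqp v u h1 with ⟨h3, _⟩ | ⟨_, h4⟩
        · omega
        · omega
    have C2 : ∀ u v : Fin n, (σp.symm u : ℕ) < (σp.symm v : ℕ) →
        (σq.symm u : ℕ) < (σq.symm v : ℕ) := by
      intro u v h
      rcases hqp u v h with ⟨h1, _⟩ | ⟨h1, h2⟩
      · exact h1
      · rcases hpq v u h1 with ⟨h3, _⟩ | ⟨_, h4⟩
        · omega
        · omega
    have hlt : ∀ a b : Fin n, σp.symm (σq a) < σp.symm (σq b) ↔ a < b := by
      intro a b
      constructor
      · intro h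
        have h2 := C2 (σq a) (σq b) h
        simp only [Equiv.symm_apply_apply] at h2
        exact h2
      · intro h
        exact C1 (σq a) (σq b) (by simp only [Equiv.symm_apply_apply]; exact h)
    have hmri : ∀ a b : Fin n, σp.symm (σq a) ≤ σp.symm (σq b) ↔ a ≤ b := by
      intro a b
      constructor
      · intro h
        by_contra hab
        have hba : b < a := lt_of_not_ge hab
        have := (hlt b a).2 hba
        exact absurd (lt_of_le_of_lt h this) (lt_irrefl _)
      · intro h
        rcases lt_or_eq_of_le h with h | h
        · exact le_of_lt ((hlt a b).2 h)
        · subst h; exact le_rfl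
    have he := Subsingleton.elim
      ({ toEquiv := σq.trans σp.symm, map_rel_iff' := fun {a b} => hmri a b } : Fin n ≃o Fin n)
      (OrderIso.refl (Fin n))
    have hσ : σp = σq := by
      refine Equiv.ext fun x => ?_
      have h1 : σp.symm (σq x) = x := by
        have := DFunLike.congr_fun he x
        exact this
      have h2 := congrArg σp h1
      simp only [Equiv.apply_symm_apply] at h2
      exact h2.symm
    subst hσ
    have hidx : ip = iq := by
      funext t
      have ht1 : (t : ℕ) + 1 < n := by omega
      have ht0 : (t : ℕ) < n := by omega
      set u := σp ⟨(t : ℕ), ht0⟩ with hu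
      set v := σp ⟨(t : ℕ) + 1, ht1⟩ with hv
      have hsu : σp.symm u = ⟨(t : ℕ), ht0⟩ := Equiv.symm_apply_apply _ _
      have hsv : σp.symm v = ⟨(t : ℕ) + 1, ht1⟩ := Equiv.symm_apply_apply _ _
      have hpos : (σp.symm u : ℕ) < (σp.symm v : ℕ) := by
        rw [hsu, hsv]; exact Nat.lt_succ_self _
      have h1 : minSep (idxFun ip) (t : ℕ) ((t : ℕ) + 1) ≤
          minSep (idxFun iq) (t : ℕ) ((t : ℕ) + 1) := by
        rcases hpq u v hpos with ⟨_, h2⟩ | ⟨h2, _⟩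
        · rw [hsu, hsv] at h2; exact h2
        · rw [hsu, hsv] at h2
          have : (t : ℕ) + 1 < (t : ℕ) := h2
          omega
      have h2 : minSep (idxFun iq) (t : ℕ) ((t : ℕ) + 1) ≤
          minSep (idxFun ip) (t : ℕ) ((t : ℕ) + 1) := by
        rcases hqp u v hpos with ⟨_, h2⟩ | ⟨h2, _⟩
        · rw [hsu, hsv] at h2; exact h2
        · rw [hsu, hsv] at h2
          have : (t : ℕ) + 1 < (t : ℕ) := h2
          omega
      have heq : idxFun ip (t : ℕ) = idxFun iq (t : ℕ) := by
        rw [← minSep_single (idxFun ip), ← minSep_single (idxFun iq)]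
        omega
      have htlt : (t : ℕ) < n - 1 := t.2
      simp only [idxFun, dif_pos htlt] at heq
      have hval : (ip ⟨(t : ℕ), htlt⟩ : ℕ) = (iq ⟨(t : ℕ), htlt⟩ : ℕ) := by omega
      have := Fin.ext hval
      simpa [Fin.eta] using this
    rw [hidx]
  · intro p q r hpq hqr u v h
    rcases hqr u v h with ⟨h1, h2⟩ | ⟨h1, h2⟩
    · rcases hpq u v h1 with ⟨h3, h4⟩ | ⟨h3, h4⟩
      · exact Or.inl ⟨h3, le_trans h4 h2⟩
      · exact Or.inr ⟨h3, lt_of_lt_of_le h4 h2⟩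
    · rcases hpq v u h1 with ⟨h3, h4⟩ | ⟨h3, h4⟩
      · exact Or.inr ⟨h3, lt_of_le_of_lt h4 h2⟩
      · exact Or.inl ⟨h3, le_of_lt (lt_trans h4 h2)⟩
end
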